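/- For any ab-word w of length rn-1 arising as the excedance word of some element of G_{r,n}, the map π ↦ |π| (forgetting colors) is a bijection from {π ∈ G_{r,n} : w_π = w} onto {σ ∈ S_n : the excedance word of σ matches Ψ(w)}, where Ψ(w) ∈ {a, b, a+b}^{n-1} records for each column i of the matrix form of w: 'a' if all entries are a, 'b' if all entries are b, and 'a+b' otherwise (position i with value a+b imposing no constraint on whether i is an excedance of σ). -/

import Mathlib

/-- Entry of the excedance matrix of the colored permutation `π = (z, τ) ∈ G_{r,n}`
at letter `i` with color `j` (`0 ≤ j ≤ r-1`): it is `b` (encoded `True`) iff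
`π(i^{[j]}) > i^{[j]}` in the color order
`1^{[r-1]} < ⋯ < n^{[r-1]} < ⋯ < 1^{[0]} < ⋯ < n^{[0]}`.
Here `π(i^{[j]}) = τ(i)^{[(z_{τ(i)} + j) mod r]}`, and a letter with a strictly
smaller color, or the same color and a larger index, is larger. -/
def excB (r n : ℕ) (z : Fin n → Fin r) (τ : Equiv.Perm (Fin n)) (i : Fin n) (j : ℕ) :
    Prop :=
  ((z (τ i) : ℕ) + j) % r < j ∨
    (((z (τ i) : ℕ) + j) % r = j ∧ (i : ℕ) < (τ i : ℕ))

/-- `π = (z, τ)` has excedance word `b^k a^{rn-1-k}`: reading the excedance matrix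
row by row from color `r-1` down to color `0` (the entry `(i,j)` sits at position
`(r-1-j)·n + i`, 0-based) and dropping the last entry, the first `k` entries are `b`
and the rest are `a`. -/
def hasWordBA (r n k : ℕ) (z : Fin n → Fin r) (τ : Equiv.Perm (Fin n)) : Prop :=
  ∀ (i : Fin n) (j : Fin r), (r - 1 - (j : ℕ)) * n + (i : ℕ) < r * n - 1 →
    (excB r n z τ i (j : ℕ) ↔ (r - 1 - (j : ℕ)) * n + (i : ℕ) < k)

/-- `[b^k a^{rn-1-k}]`: the number of colored permutations in `G_{r,n}` whose
excedance word is `b^k a^{rn-1-k}`. -/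
noncomputable def cntBA (r n k : ℕ) : ℕ :=
  Nat.card {π : (Fin n → Fin r) × Equiv.Perm (Fin n) // hasWordBA r n k π.1 π.2}

/-- `c_i(π) = z_i(π⁻¹)`: the color attached to `i` by the inverse of `π = (z, τ)`,
namely `(- z_{τ(i)}) mod r`. -/
def cVal (r n : ℕ) (z : Fin n → Fin r) (τ : Equiv.Perm (Fin n)) (i : Fin n) : ℕ :=
  (r - (z (τ i) : ℕ)) % r

lemma excB_char (r c j : ℕ) (hc : c < r) (hj : j < r) (e : Prop) :
    ((c + j) % r < j ∨ ((c + j) % r = j ∧ e)) ↔ (if c = 0 then e else r - c ≤ j) := by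
  rcases Nat.lt_or_ge (c + j) r with h | h
  · rw [Nat.mod_eq_of_lt h]
    rcases Nat.eq_zero_or_pos c with rfl | hc0
    · simp
    · rw [if_neg (by omega)]
      constructor
      · rintro (h1 | ⟨h1, _⟩) <;> omega
      · omega
  · have hm : (c + j) % r = c + j - r := by
      rw [Nat.mod_eq_sub_mod h, Nat.mod_eq_of_lt (by omega)]
    rw [hm, if_neg (by omega)]
    constructor
    · intro _; omega
    · intro _; left; omega

lemma excB_iff (r n : ℕ) (z : Fin n → Fin r) (τ : Equiv.Perm (Fin n)) (i : Fin n)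
    (j : ℕ) (hj : j < r) :
    excB r n z τ i j ↔
      (if (z (τ i) : ℕ) = 0 then (i : ℕ) < (τ i : ℕ) else r - (z (τ i) : ℕ) ≤ j) :=
  excB_char r _ j (z (τ i)).isLt hj _

lemma color_eq (r n : ℕ) (hr : 0 < r) (z z' : Fin n → Fin r) (τ τ' : Equiv.Perm (Fin n))
    (i : Fin n)
    (h : ∀ j : Fin r, ((i : ℕ), (j : ℕ)) ≠ (n - 1, 0) →
      (excB r n z τ i (j : ℕ) ↔ excB r n z' τ' i (j : ℕ))) :
    z (τ i) = z' (τ' i) := by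
  set c := (z (τ i) : ℕ) with hc
  set c' := (z' (τ' i) : ℕ) with hc'
  have hcr : c < r := (z (τ i)).isLt
  have hcr' : c' < r := (z' (τ' i)).isLt
  have hτi : (τ i : ℕ) < n := (τ i).isLt
  have hτ'i : (τ' i : ℕ) < n := (τ' i).isLt
  have hi : (i : ℕ) < n := i.isLt
  have H : ∀ j : ℕ, j < r → ((i : ℕ), j) ≠ (n - 1, 0) →
      ((if c = 0 then (i : ℕ) < (τ i : ℕ) else r - c ≤ j) ↔
        (if c' = 0 then (i : ℕ) < (τ' i : ℕ) else r - c' ≤ j)) := by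
    intro j hj hne
    have h1 := h ⟨j, hj⟩ hne
    rw [show ((⟨j, hj⟩ : Fin r) : ℕ) = j from rfl] at h1
    rwa [excB_iff r n z τ i j hj, excB_iff r n z' τ' i j hj] at h1
  apply Fin.val_injective
  show c = c'
  have hne0 : ∀ j : ℕ, j ≠ 0 → ((i : ℕ), j) ≠ (n - 1, 0) := by
    intro j hj
    simp only [ne_eq, Prod.mk.injEq, not_and]
    omega
  rcases Nat.eq_zero_or_pos c with hc0 | hc0 <;> rcases Nat.eq_zero_or_pos c' with hc0' | hc0'
  · omega
  · -- c = 0, c' > 0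
    exfalso
    have h1 := H (r - 1) (by omega) (hne0 _ (by omega))
    rw [if_pos hc0, if_neg (by omega)] at h1
    have he : (i : ℕ) < (τ i : ℕ) := h1.mpr (by omega)
    by_cases hin : (i : ℕ) = n - 1
    · omega
    · have h2 := H 0 hr (by simp only [ne_eq, Prod.mk.injEq, not_and]; omega)
      rw [if_pos hc0, if_neg (by omega)] at h2
      have := h2.mp he
      omega
  · -- c > 0, c' = 0
    exfalso
    have h1 := H (r - 1) (by omega) (hne0 _ (by omega))
    rw [if_neg (by omega), if_pos hc0'] at h1
    have he : (i : ℕ) < (τ' i : ℕ) := h1.mp (by omega)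
    by_cases hin : (i : ℕ) = n - 1
    · omega
    · have h2 := H 0 hr (by simp only [ne_eq, Prod.mk.injEq, not_and]; omega)
      rw [if_neg (by omega), if_pos hc0'] at h2
      have := h2.mpr he
      omega
  · have h1 := H (r - c) (by omega) (hne0 _ (by omega))
    have h2 := H (r - c') (by omega) (hne0 _ (by omega))
    rw [if_neg (by omega), if_neg (by omega)] at h1 h2
    have := h1.mp (by omega)
    have := h2.mpr (by omega)
    omega

/-- For any ab-word `w` (encoded by its matrix form `B : Fin n → Fin r → Bool`,
with `B i j = true` meaning `b`; the last entry, at letter `n-1` color `0`, is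
dropped) arising as the excedance word of some element of `G_{r,n}`, the map
`π ↦ |π|` is a bijection from `{π ∈ G_{r,n} : w_π = w}` onto the set of `σ ∈ S_n`
whose excedance word matches `Ψ(w)`: at each column `i < n-1` that is all-`b`,
`i` is an excedance of `σ`; at each all-`a` column, `i` is a non-excedance; and
mixed (`a+b`) columns impose no constraint. -/
theorem stmt13 (r n : ℕ) (hr : 0 < r) (B : Fin n → Fin r → Bool)
    (hB : ∃ (z : Fin n → Fin r) (τ : Equiv.Perm (Fin n)),
      ∀ (i : Fin n) (j : Fin r), ((i : ℕ), (j : ℕ)) ≠ (n - 1, 0) →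
        (excB r n z τ i (j : ℕ) ↔ B i j = true)) :
    ∃ f : {π : (Fin n → Fin r) × Equiv.Perm (Fin n) //
            ∀ (i : Fin n) (j : Fin r), ((i : ℕ), (j : ℕ)) ≠ (n - 1, 0) →
              (excB r n π.1 π.2 i (j : ℕ) ↔ B i j = true)} ≃
          {σ : Equiv.Perm (Fin n) //
            ∀ i : Fin n, (i : ℕ) < n - 1 →
              ((∀ j : Fin r, B i j = true) → (i : ℕ) < (σ i : ℕ)) ∧
              ((∀ j : Fin r, B i j = false) → (σ i : ℕ) ≤ (i : ℕ))},
      ∀ π, ((f π : Equiv.Perm (Fin n))) = π.val.2 := by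
  obtain ⟨z₀, τ₀, h₀⟩ := hB
  -- forward well-definedness
  have fwd : ∀ (z : Fin n → Fin r) (τ : Equiv.Perm (Fin n)),
      (∀ (i : Fin n) (j : Fin r), ((i : ℕ), (j : ℕ)) ≠ (n - 1, 0) →
        (excB r n z τ i (j : ℕ) ↔ B i j = true)) →
      ∀ i : Fin n, (i : ℕ) < n - 1 →
        ((∀ j : Fin r, B i j = true) → (i : ℕ) < (τ i : ℕ)) ∧
        ((∀ j : Fin r, B i j = false) → (τ i : ℕ) ≤ (i : ℕ)) := by
    intro z τ hπ i hi
    have hval : ∀ j : Fin r, ((i : ℕ), (j : ℕ)) ≠ (n - 1, 0) := by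
      intro j; simp only [ne_eq, Prod.mk.injEq, not_and]; omega
    have hcr : (z (τ i) : ℕ) < r := (z (τ i)).isLt
    constructor
    · intro hb
      have h0 : excB r n z τ i 0 := (hπ i ⟨0, hr⟩ (hval _)).mpr (hb _)
      rw [excB_iff r n z τ i 0 hr] at h0
      by_cases hc0 : (z (τ i) : ℕ) = 0
      · rwa [if_pos hc0] at h0
      · rw [if_neg hc0] at h0; omega
    · intro ha
      by_contra hgt
      push_neg at hgt
      by_cases hc0 : (z (τ i) : ℕ) = 0
      · have h0 : excB r n z τ i 0 :=
          (excB_iff r n z τ i 0 hr).mpr (by rw [if_pos hc0]; exact hgt)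
        have := (hπ i ⟨0, hr⟩ (hval _)).mp h0
        rw [ha _] at this; exact Bool.false_ne_true this
      · have h0 : excB r n z τ i (r - 1) :=
          (excB_iff r n z τ i (r - 1) (by omega)).mpr (by rw [if_neg hc0]; omega)
        have := (hπ i ⟨r - 1, by omega⟩ (hval _)).mp h0
        rw [ha _] at this; exact Bool.false_ne_true this
  have bwd : ∀ (σ : Equiv.Perm (Fin n)),
      (∀ i : Fin n, (i : ℕ) < n - 1 →
        ((∀ j : Fin r, B i j = true) → (i : ℕ) < (σ i : ℕ)) ∧
        ((∀ j : Fin r, B i j = false) → (σ i : ℕ) ≤ (i : ℕ))) →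
      ∀ (i : Fin n) (j : Fin r), ((i : ℕ), (j : ℕ)) ≠ (n - 1, 0) →
        (excB r n (fun k => z₀ (τ₀ (σ⁻¹ k))) σ i (j : ℕ) ↔ B i j = true) := by
    intro σ hσ i j hne
    rw [excB_iff r n _ σ i (j : ℕ) j.isLt, ← h₀ i j hne,
      excB_iff r n z₀ τ₀ i (j : ℕ) j.isLt]
    simp only [Equiv.Perm.inv_def, Equiv.symm_apply_apply]
    by_cases hc0 : (z₀ (τ₀ i) : ℕ) = 0
    · rw [if_pos hc0, if_pos hc0]
      have hσi : (σ i : ℕ) < n := (σ i).isLt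
      have hτi : (τ₀ i : ℕ) < n := (τ₀ i).isLt
      have hi : (i : ℕ) < n := i.isLt
      by_cases hin : (i : ℕ) = n - 1
      · constructor <;> (intro h; omega)
      · have hi' : (i : ℕ) < n - 1 := by omega
        have hval : ∀ j' : Fin r, ((i : ℕ), (j' : ℕ)) ≠ (n - 1, 0) := by
          intro j'; simp only [ne_eq, Prod.mk.injEq, not_and]; omega
        obtain ⟨hb, ha⟩ := hσ i hi'
        by_cases he : (i : ℕ) < (τ₀ i : ℕ)
        · have : (i : ℕ) < (σ i : ℕ) := hb (fun j' =>
            (h₀ i j' (hval j')).mp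
              ((excB_iff r n z₀ τ₀ i (j' : ℕ) j'.isLt).mpr (by rw [if_pos hc0]; exact he)))
          constructor <;> (intro _; omega)
        · have : (σ i : ℕ) ≤ (i : ℕ) := ha (fun j' => by
            rw [← Bool.not_eq_true]
            intro hb'
            have hx := (h₀ i j' (hval j')).mpr hb'
            rw [excB_iff r n z₀ τ₀ i (j' : ℕ) j'.isLt, if_pos hc0] at hx
            exact he hx)
          constructor <;> (intro h; omega)
    · rw [if_neg hc0, if_neg hc0]
  refine ⟨⟨fun π => ⟨π.1.2, fwd π.1.1 π.1.2 π.2⟩,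
    fun σ => ⟨(fun k => z₀ (τ₀ (σ.1⁻¹ k)), σ.1), bwd σ.1 σ.2⟩, ?_, fun σ => Subtype.ext rfl⟩,
    fun π => rfl⟩
  rintro ⟨⟨z, τ⟩, hπ⟩
  apply Subtype.ext
  simp only
  rw [Prod.mk.injEq]
  refine ⟨funext fun k => ?_, rfl⟩
  have hce := color_eq r n hr z₀ z τ₀ τ (τ⁻¹ k)
    (fun j hv => ((h₀ _ j hv).trans (hπ _ j hv).symm))
  simpa using hce
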